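/- Let R be a commutative ring with identity and M a multiplication R-module. If N is a sa-small submodule of M, then (N :_R M) is a sa-small ideal of R. Conversely, if moreover M is finitely generated and faithful and (N :_R M) is a sa-small ideal of R, then N is a sa-small submodule of M. -/

import Mathlib

open Submodule

/-- A submodule `N` of `M` is small (superfluous) in `M`: for every submodule `L`,
`N + L = M` implies `L = M`. -/
def IsSmallSubmodule {R M : Type*} [CommRing R] [AddCommGroup M] [Module R M]
    (N : Submodule R M) : Prop :=
  ∀ L : Submodule R M, N ⊔ L = ⊤ → L = ⊤

/-- `N` is a semiannihilator-small (sa-small) submodule of `M`: for every submodule `L`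
with `N + L = M`, the annihilator of `L` is a small ideal of `R`. -/
def IsSaSmall {R M : Type*} [CommRing R] [AddCommGroup M] [Module R M]
    (N : Submodule R M) : Prop :=
  ∀ L : Submodule R M, N ⊔ L = ⊤ → IsSmallSubmodule (Submodule.annihilator L : Ideal R)

lemma isSmall_of_le {R M : Type*} [CommRing R] [AddCommGroup M] [Module R M]
    {N N' : Submodule R M} (h : N ≤ N') (hs : IsSmallSubmodule N') :
    IsSmallSubmodule N := by
  intro L hL
  exact hs L (top_unique (hL ▸ sup_le_sup_right h L))

lemma colon_smul_top {R M : Type*} [CommRing R] [AddCommGroup M] [Module R M]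
    (hmult : ∀ P : Submodule R M, ∃ I : Ideal R, P = I • (⊤ : Submodule R M))
    (N : Submodule R M) : (N.colon ⊤) • (⊤ : Submodule R M) = N := by
  obtain ⟨I, hI⟩ := hmult N
  apply le_antisymm
  · exact Submodule.smul_le.2 fun r hr m hm => Submodule.mem_colon.1 hr m trivial
  · have hle : I ≤ N.colon ⊤ := by
      intro i hi
      rw [Submodule.mem_colon]
      intro m _
      rw [hI]
      exact Submodule.smul_mem_smul hi trivial
    calc N = I • ⊤ := hI
      _ ≤ (N.colon ⊤) • ⊤ := Submodule.smul_mono_left hle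

/-- For a multiplication module `M`: if `N` is sa-small in `M` then
`(N :_R M)` is a sa-small ideal of `R`; conversely, if moreover `M` is finitely generated
and faithful and `(N :_R M)` is a sa-small ideal, then `N` is sa-small in `M`. -/
theorem isSaSmall_colon_iff {R M : Type*} [CommRing R] [Nontrivial R]
    [AddCommGroup M] [Module R M]
    (hmult : ∀ P : Submodule R M, ∃ I : Ideal R, P = I • (⊤ : Submodule R M))
    (N : Submodule R M) :
    (IsSaSmall N → IsSaSmall (R := R) (M := R) (N.colon ⊤)) ∧
    (Module.Finite R M → Submodule.annihilator (⊤ : Submodule R M) = ⊥ →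
      IsSaSmall (R := R) (M := R) (N.colon ⊤) → IsSaSmall N) := by
  constructor
  · intro hN L hL
    have hsup : N ⊔ L • (⊤ : Submodule R M) = ⊤ := by
      have := congrArg (fun I : Ideal R => I • (⊤ : Submodule R M)) hL
      simp only [Submodule.sup_smul, colon_smul_top hmult N] at this
      simpa [Submodule.sup_smul, Submodule.top_smul, colon_smul_top hmult N] using this
    refine isSmall_of_le ?_ (hN (L • ⊤) hsup)
    intro r hr
    rw [Submodule.mem_annihilator] at hr ⊢
    intro n hn
    refine Submodule.smul_induction_on hn (fun l hl m _ => ?_) (fun x y hx hy => ?_)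
    · rw [smul_smul]
      have : r * l = 0 := by simpa using hr l hl
      rw [this, zero_smul]
    · rw [smul_add, hx, hy, add_zero]
  · intro hfin hfaith hcolon L hL
    obtain ⟨I, hI⟩ := hmult L
    have hsup : ((N.colon ⊤) ⊔ I) • (⊤ : Submodule R M) = ⊤ := by
      rw [Submodule.sup_smul, colon_smul_top hmult N, ← hI, hL]
    have htop : (N.colon ⊤) ⊔ I = ⊤ := by
      obtain ⟨r, hr1, hr0⟩ :=
        Submodule.exists_sub_one_mem_and_smul_eq_zero_of_fg_of_le_smul
          ((N.colon ⊤) ⊔ I) (⊤ : Submodule R M) hfin.1 (le_of_eq hsup.symm)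
      have : r ∈ Submodule.annihilator (⊤ : Submodule R M) :=
        Submodule.mem_annihilator.2 fun m hm => hr0 m hm
      rw [hfaith, Submodule.mem_bot] at this
      have h1 : (-1 : R) ∈ (N.colon ⊤) ⊔ I := by simpa [this] using hr1
      rw [eq_top_iff]
      intro x _
      simpa using Submodule.smul_mem _ (-x) h1
    refine isSmall_of_le ?_ (hcolon I htop)
    intro r hr
    rw [Submodule.mem_annihilator] at hr ⊢
    intro i hi
    have : r * i ∈ Submodule.annihilator (⊤ : Submodule R M) := by
      rw [Submodule.mem_annihilator]
      intro m _
      have : i • m ∈ L := hI ▸ Submodule.smul_mem_smul hi trivial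
      have := hr (i • m) this
      simpa [smul_smul] using this
    rw [hfaith, Submodule.mem_bot] at this
    simpa using this
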